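/- Let S be a finite set, Γ a real symmetric S × S matrix with nonnegative entries, δ : S → ℝ a unit vector with nonnegative entries satisfying Γ δ = λ(Γ) δ, and for each x ∈ S let ψ_x be a unit vector in a complex inner product space. If |⟨ψ_x, ψ_y⟩| ≤ c for every pair (x, y) with Γ_{xy} ≠ 0, then |Σ_{x,y ∈ S} Γ_{xy} δ_x δ_y ⟨ψ_x, ψ_y⟩| ≤ c · λ(Γ). In particular, if a quantum algorithm makes all pairs of final states with Γ_{xy} ≠ 0 nearly orthogonal, the final progress measure W^T satisfies |W^T| ≤ c · W⁰ = c · λ(Γ). -/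

import Mathlib

open scoped Matrix

/-- The spectral norm (operator 2-norm) of a matrix over `𝕜`. -/
noncomputable def specNorm {𝕜 : Type*} [RCLike 𝕜] {m n : Type*} [Fintype m] [Fintype n]
    [DecidableEq n] (A : Matrix m n 𝕜) : ℝ :=
  ‖LinearMap.toContinuousLinearMap (Matrix.toEuclideanLin A)‖

/-- If all pairs of unit vectors `ψ_x, ψ_y` with `Γ_{xy} ≠ 0` have overlap at most `c`,
then the adversary progress measure `Σ Γ_{xy} δ_x δ_y ⟨ψ_x, ψ_y⟩`, with `δ` a nonnegative
unit principal eigenvector of `Γ`, is at most `c · λ(Γ)` in absolute value. -/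
theorem final_progress_measure_bound
    {S : Type*} [Fintype S] [DecidableEq S]
    {E : Type*} [NormedAddCommGroup E] [InnerProductSpace ℂ E]
    (Γ : Matrix S S ℝ) (hsym : Γ.IsSymm) (hnn : ∀ a b, 0 ≤ Γ a b)
    (δ : S → ℝ) (hδnn : ∀ a, 0 ≤ δ a) (hδ : ∑ a, δ a ^ 2 = 1)
    (heig : Γ.mulVec δ = specNorm Γ • δ)
    (ψ : S → E) (hψ : ∀ a, ‖ψ a‖ = 1)
    (c : ℝ)
    (hc : ∀ a b, Γ a b ≠ 0 → ‖(inner ℂ (ψ a) (ψ b) : ℂ)‖ ≤ c) :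
    ‖∑ a : S, ∑ b : S, ((Γ a b * δ a * δ b : ℝ) : ℂ) * inner ℂ (ψ a) (ψ b)‖ ≤
      c * specNorm Γ := by
  set lam := specNorm Γ with hlam
  have hsumb : ∀ a, ∑ b, Γ a b * δ b = lam * δ a := by
    intro a
    have := congrFun heig a
    simpa [Matrix.mulVec, dotProduct, smul_eq_mul] using this
  have key : ∀ a b, ‖((Γ a b * δ a * δ b : ℝ) : ℂ) * inner ℂ (ψ a) (ψ b)‖ ≤
      Γ a b * δ a * δ b * c := by
    intro a b
    rw [norm_mul, Complex.norm_real]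
    have h1 : 0 ≤ Γ a b * δ a * δ b :=
      mul_nonneg (mul_nonneg (hnn a b) (hδnn a)) (hδnn b)
    rw [Real.norm_of_nonneg h1]
    rcases eq_or_ne (Γ a b) 0 with h | h
    · simp [h]
    · exact mul_le_mul_of_nonneg_left (hc a b h) h1
  calc ‖∑ a : S, ∑ b : S, ((Γ a b * δ a * δ b : ℝ) : ℂ) * inner ℂ (ψ a) (ψ b)‖
      ≤ ∑ a, ∑ b, Γ a b * δ a * δ b * c := by
        refine (norm_sum_le _ _).trans ?_
        exact Finset.sum_le_sum fun a _ =>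
          (norm_sum_le _ _).trans (Finset.sum_le_sum fun b _ => key a b)
    _ = ∑ a, c * lam * δ a ^ 2 := by
        refine Finset.sum_congr rfl fun a _ => ?_
        calc ∑ b, Γ a b * δ a * δ b * c = (δ a * c) * ∑ b, Γ a b * δ b := by
              rw [Finset.mul_sum]
              exact Finset.sum_congr rfl fun b _ => by ring
          _ = c * lam * δ a ^ 2 := by rw [hsumb a]; ring
    _ = c * lam := by rw [← Finset.mul_sum, hδ, mul_one]
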